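/- Under perfect SF orthogonality (only co-SF interference, q = q0, so l_q = l_{q0} and P_q = P_{q0}), the collision-overlap expectation of Corollary 1 simplifies: for u > 0, T_c ≥ l_{q0}, (1/(2T_c))∫_{−T_c}^{T_c} 1/(1 + u h(t)) dt = 1 − l_{q0}/T_c + (l_{q0}/(T_c u)) log(1 + u). -/

import Mathlib

open MeasureTheory Set
noncomputable def overlap (l0 lq T : ℝ) : ℝ :=
  (volume (Icc T (T + lq) ∩ Icc 0 l0)).toReal / l0

lemma overlap_eq (l0 t : ℝ) :
    overlap l0 l0 t = max 0 (min (t + l0) l0 - max t 0) / l0 := by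
  unfold overlap
  rw [Icc_inter_Icc, Real.volume_Icc, ENNReal.toReal_ofReal', max_comm]

theorem stmt_12 (l0 Tc u : ℝ) (hl0 : 0 < l0) (hTc : l0 ≤ Tc) (hu : 0 < u) :
    (1 / (2 * Tc)) * ∫ t in Icc (-Tc) Tc, 1 / (1 + u * overlap l0 l0 t) =
      1 - l0 / Tc + (l0 / (Tc * u)) * Real.log (1 + u) := by
  have hTc0 : 0 < Tc := lt_of_lt_of_le hl0 hTc
  set f : ℝ → ℝ := fun t => 1 / (1 + u * (max 0 (min (t + l0) l0 - max t 0) / l0)) with hf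
  have hden : ∀ t, 0 < 1 + u * (max 0 (min (t + l0) l0 - max t 0) / l0) := by
    intro t
    have h1 : 0 ≤ max 0 (min (t + l0) l0 - max t 0) / l0 :=
      div_nonneg (le_max_left _ _) hl0.le
    nlinarith
  have hcont : Continuous f := by
    apply Continuous.div continuous_const
    · fun_prop
    · intro t; exact (hden t).ne'
  have hstep : ∫ t in Icc (-Tc) Tc, 1 / (1 + u * overlap l0 l0 t) = ∫ t in Icc (-Tc) Tc, f t := by
    apply integral_congr_ae
    filter_upwards with t
    rw [overlap_eq]
  rw [hstep]
  have hIcc : ∫ t in Icc (-Tc) Tc, f t = ∫ t in (-Tc)..Tc, f t := by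
    rw [intervalIntegral.integral_of_le (by linarith), integral_Icc_eq_integral_Ioc]
  rw [hIcc]
  have hii : ∀ a b : ℝ, IntervalIntegrable f volume a b := fun a b =>
    hcont.intervalIntegrable a b
  have hsplit : ∫ t in (-Tc)..Tc, f t =
      (∫ t in (-Tc)..(-l0), f t) + (∫ t in (-l0)..0, f t) + (∫ t in (0:ℝ)..l0, f t)
        + (∫ t in l0..Tc, f t) := by
    rw [intervalIntegral.integral_add_adjacent_intervals (hii _ _) (hii _ _),
        intervalIntegral.integral_add_adjacent_intervals (hii _ _) (hii _ _),
        intervalIntegral.integral_add_adjacent_intervals (hii _ _) (hii _ _)]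
  have hI1 : ∫ t in (-Tc)..(-l0), f t = Tc - l0 := by
    rw [intervalIntegral.integral_congr (g := fun _ => (1:ℝ)) ?_]
    · simp; ring
    · intro t ht
      rw [uIcc_of_le (by linarith)] at ht
      obtain ⟨h1, h2⟩ := ht
      have hmax : max t 0 = 0 := max_eq_right (by linarith)
      have hmin : min (t + l0) l0 = t + l0 := min_eq_left (by linarith)
      have : max 0 (min (t + l0) l0 - max t 0) = 0 := max_eq_left (by rw [hmax, hmin]; linarith)
      simp [hf, this]
  have hI4 : ∫ t in l0..Tc, f t = Tc - l0 := by
    rw [intervalIntegral.integral_congr (g := fun _ => (1:ℝ)) ?_]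
    · simp
    · intro t ht
      rw [uIcc_of_le (by linarith)] at ht
      obtain ⟨h1, h2⟩ := ht
      have hmax : max t 0 = t := max_eq_left (by linarith)
      have hmin : min (t + l0) l0 = l0 := min_eq_right (by linarith)
      have : max 0 (min (t + l0) l0 - max t 0) = 0 := max_eq_left (by rw [hmax, hmin]; linarith)
      simp [hf, this]
  -- I2
  have hden2 : ∀ t ∈ uIcc (-l0) (0:ℝ), 0 < l0 + u * (t + l0) := by
    intro t ht
    rw [uIcc_of_le (by linarith)] at ht
    nlinarith [ht.1, ht.2]
  have hI2 : ∫ t in (-l0)..0, f t = (l0 / u) * Real.log (1 + u) := by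
    have heq : ∀ t ∈ uIcc (-l0) (0:ℝ), f t = l0 / (l0 + u * (t + l0)) := by
      intro t ht
      have hd := hden2 t ht
      rw [uIcc_of_le (by linarith)] at ht
      obtain ⟨h1, h2⟩ := ht
      have hmax : max t 0 = 0 := max_eq_right (by linarith)
      have hmin : min (t + l0) l0 = t + l0 := min_eq_left (by linarith)
      have hm2 : max 0 (t + l0) = t + l0 := max_eq_right (by linarith)
      simp only [hf, hmax, hmin, sub_zero, hm2]
      have hp : (0:ℝ) < 1 + u * ((t + l0) / l0) := by
        have : (0:ℝ) ≤ (t + l0) / l0 := div_nonneg (by linarith) hl0.le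
        nlinarith
      rw [div_eq_div_iff hp.ne' hd.ne']
      field_simp
    rw [intervalIntegral.integral_congr heq]
    have hderiv : ∀ t ∈ uIcc (-l0) (0:ℝ),
        HasDerivAt (fun s => (l0 / u) * Real.log (l0 + u * (s + l0)))
          (l0 / (l0 + u * (t + l0))) t := by
      intro t ht
      have hd := hden2 t ht
      have h1 : HasDerivAt (fun s : ℝ => l0 + u * (s + l0)) u t := by
        simpa using ((hasDerivAt_id t).add_const l0).const_mul u |>.const_add l0
      have h2 := (h1.log hd.ne').const_mul (l0 / u)
      refine h2.congr_deriv ?_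
      field_simp [hu.ne', hd.ne']
    rw [intervalIntegral.integral_eq_sub_of_hasDerivAt hderiv ?_]
    · have : l0 + u * ((0:ℝ) + l0) = l0 * (1 + u) := by ring
      rw [this]
      have : l0 + u * (-l0 + l0) = l0 := by ring
      rw [this, Real.log_mul hl0.ne' (by positivity)]
      ring
    · apply ContinuousOn.intervalIntegrable
      apply ContinuousOn.div continuousOn_const (by fun_prop)
      intro t ht
      exact (hden2 t ht).ne'
  -- I3
  have hden3 : ∀ t ∈ uIcc (0:ℝ) l0, 0 < l0 + u * (l0 - t) := by
    intro t ht
    rw [uIcc_of_le (by linarith)] at ht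
    nlinarith [ht.1, ht.2]
  have hI3 : ∫ t in (0:ℝ)..l0, f t = (l0 / u) * Real.log (1 + u) := by
    have heq : ∀ t ∈ uIcc (0:ℝ) l0, f t = l0 / (l0 + u * (l0 - t)) := by
      intro t ht
      have hd := hden3 t ht
      rw [uIcc_of_le (by linarith)] at ht
      obtain ⟨h1, h2⟩ := ht
      have hmax : max t 0 = t := max_eq_left (by linarith)
      have hmin : min (t + l0) l0 = l0 := min_eq_right (by linarith)
      have hm2 : max 0 (l0 - t) = l0 - t := max_eq_right (by linarith)
      simp only [hf, hmax, hmin, hm2]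
      have hp : (0:ℝ) < 1 + u * ((l0 - t) / l0) := by
        have : (0:ℝ) ≤ (l0 - t) / l0 := div_nonneg (by linarith) hl0.le
        nlinarith
      rw [div_eq_div_iff hp.ne' hd.ne']
      field_simp
    rw [intervalIntegral.integral_congr heq]
    have hderiv : ∀ t ∈ uIcc (0:ℝ) l0,
        HasDerivAt (fun s => -(l0 / u) * Real.log (l0 + u * (l0 - s)))
          (l0 / (l0 + u * (l0 - t))) t := by
      intro t ht
      have hd := hden3 t ht
      have h1 : HasDerivAt (fun s : ℝ => l0 + u * (l0 - s)) (-u) t := by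
        have : HasDerivAt (fun s : ℝ => l0 - s) (-1) t := by
          simpa using (hasDerivAt_id t).const_sub l0
        simpa using (this.const_mul u).const_add l0
      have h2 := (h1.log hd.ne').const_mul (-(l0 / u))
      refine h2.congr_deriv ?_
      field_simp [hu.ne', hd.ne']
    rw [intervalIntegral.integral_eq_sub_of_hasDerivAt hderiv ?_]
    · have e1 : l0 + u * (l0 - l0) = l0 := by ring
      have e2 : l0 + u * (l0 - 0) = l0 * (1 + u) := by ring
      rw [e1, e2, Real.log_mul hl0.ne' (by positivity)]
      ring
    · apply ContinuousOn.intervalIntegrable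
      apply ContinuousOn.div continuousOn_const (by fun_prop)
      intro t ht
      exact (hden3 t ht).ne'
  rw [hsplit, hI1, hI2, hI3, hI4]
  field_simp
  ring
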